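/- (Sharpness of the disjunctive Weak Rational Monotony rule.) For all real numbers x, y ∈ [0,1] with y < 1, and every z ∈ [0,1] satisfying z' ≤ z ≤ z'', where z' = (x - y)/(1 - y) if x > y and z' = 0 if x ≤ y, and z'' = x/(1 - y) if x + y < 1 and z'' = 1 if x + y ≥ 1, there exist a probability space (Ω, P) and measurable events A, B, C ⊆ Ω with P(A ∩ B) > 0, P(C|A) = x, P(Bᶜ|A) = y, and P(C | A ∩ B) = z, where Bᶜ denotes the complement of B. -/

import Mathlib

open MeasureTheory

/-- Conditional probability `P(E|H) = P(E ∩ H) / P(H)` as a real number. -/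
noncomputable def condProb {Ω : Type*} [MeasurableSpace Ω] (P : Measure Ω) (E H : Set Ω) : ℝ :=
  (P (E ∩ H)).toReal / (P H).toReal

/-- Sharpness of the disjunctive Weak Rational Monotony rule. -/
theorem dWRM_sharpness (x y z : ℝ)
    (hx : x ∈ Set.Icc (0 : ℝ) 1) (hy : y ∈ Set.Icc (0 : ℝ) 1) (hy1 : y < 1)
    (hz : z ∈ Set.Icc (0 : ℝ) 1)
    (h1 : (if x > y then (x - y) / (1 - y) else 0) ≤ z)
    (h2 : z ≤ (if x + y < 1 then x / (1 - y) else 1)) :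
    ∃ (Ω : Type) (_ : MeasurableSpace Ω) (P : Measure Ω),
      IsProbabilityMeasure P ∧
        ∃ A B C : Set Ω,
          MeasurableSet A ∧ MeasurableSet B ∧ MeasurableSet C ∧ 0 < P (A ∩ B) ∧
            condProb P C A = x ∧ condProb P Bᶜ A = y ∧ condProb P C (A ∩ B) = z := by
  classical
  obtain ⟨hx0, hx1⟩ := hx
  obtain ⟨hy0, _⟩ := hy
  obtain ⟨hz0, hz1⟩ := hz
  have h1y : (0:ℝ) < 1 - y := by linarith
  set b : ℝ := z * (1 - y) with hbdef
  have hb0 : 0 ≤ b := mul_nonneg hz0 h1y.le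
  have hb1 : b ≤ 1 - y := by nlinarith
  have hbx : b ≤ x := by
    by_cases h : x + y < 1
    · rw [if_pos h] at h2
      calc b = z * (1 - y) := hbdef
        _ ≤ (x / (1 - y)) * (1 - y) := by nlinarith
        _ = x := div_mul_cancel₀ x h1y.ne'
    · rw [if_neg h] at h2
      push_neg at h
      linarith
  have hxb : x - b ≤ y := by
    by_cases h : x > y
    · rw [if_pos h] at h1
      have : (x - y) ≤ z * (1 - y) := by
        have := (div_le_iff₀ h1y).mp h1
        linarith
      linarith
    · push_neg at h
      linarith
  refine ⟨Fin 4, ⊤, ?_⟩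
  set w0 := ENNReal.ofReal b with hw0
  set w1 := ENNReal.ofReal ((1 - y) - b) with hw1
  set w2 := ENNReal.ofReal (x - b) with hw2
  set w3 := ENNReal.ofReal (y - (x - b)) with hw3
  set P : Measure (Fin 4) :=
    w0 • Measure.dirac 0 + w1 • Measure.dirac 1 + w2 • Measure.dirac 2 + w3 • Measure.dirac 3
    with hP
  have Pdef : ∀ s : Set (Fin 4),
      P s = w0 * s.indicator 1 0 + w1 * s.indicator 1 1 + w2 * s.indicator 1 2
        + w3 * s.indicator 1 3 := by
    intro s
    simp [hP, Measure.dirac_apply' _ MeasurableSpace.measurableSet_top, mul_comm]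
  have s01 : w0 + w1 = ENNReal.ofReal (1 - y) := by
    rw [hw0, hw1, ← ENNReal.ofReal_add hb0 (by linarith)]
    ring_nf
  have s23 : w2 + w3 = ENNReal.ofReal y := by
    rw [hw2, hw3, ← ENNReal.ofReal_add (by linarith) (by linarith)]
    ring_nf
  have s02 : w0 + w2 = ENNReal.ofReal x := by
    rw [hw0, hw2, ← ENNReal.ofReal_add hb0 (by linarith)]
    ring_nf
  have Puniv : P Set.univ = 1 := by
    rw [Pdef]
    simp only [Set.indicator_univ, Pi.one_apply, mul_one]
    rw [s01, add_assoc, s23, ← ENNReal.ofReal_add (by linarith) hy0]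
    norm_num
  refine ⟨P, (⟨Puniv⟩ : IsProbabilityMeasure P), Set.univ, {0,1}, {0,2}, MeasurableSpace.measurableSet_top,
    MeasurableSpace.measurableSet_top, MeasurableSpace.measurableSet_top, ?_, ?_, ?_, ?_⟩
  · have : P (Set.univ ∩ {0,1}) = ENNReal.ofReal (1 - y) := by
      rw [Pdef]
      simp (config := { decide := true }) [Set.indicator_apply]
      exact s01
    rw [this]
    exact ENNReal.ofReal_pos.mpr h1y
  · have hC : P ({0,2} ∩ Set.univ) = ENNReal.ofReal x := by
      rw [Pdef]
      simp (config := { decide := true }) [Set.indicator_apply]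
      exact s02
    rw [condProb, hC, Puniv]
    simp [ENNReal.toReal_ofReal hx0]
  · have hBc : P (({0,1}ᶜ : Set (Fin 4)) ∩ Set.univ) = ENNReal.ofReal y := by
      rw [Pdef]
      simp (config := { decide := true }) [Set.indicator_apply]
      exact s23
    rw [condProb, hBc, Puniv]
    simp [ENNReal.toReal_ofReal hy0]
  · have hnum : P (({0,2} : Set (Fin 4)) ∩ (Set.univ ∩ {0,1})) = ENNReal.ofReal b := by
      rw [Pdef]
      simp (config := { decide := true }) [Set.indicator_apply]
      exact hw0
    have hden : P (Set.univ ∩ ({0,1} : Set (Fin 4))) = ENNReal.ofReal (1 - y) := by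
      rw [Pdef]
      simp (config := { decide := true }) [Set.indicator_apply]
      exact s01
    rw [condProb, hnum, hden, ENNReal.toReal_ofReal hb0, ENNReal.toReal_ofReal h1y.le, hbdef]
    exact mul_div_cancel_right₀ z h1y.ne'
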